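/- arXiv:2502.03496 — 5 statements merged into one kernel-verified Lean document; each statement's English description precedes it below -/
import Mathlib

section
/- Let F be the N×N DFT matrix with entries F_{mn} = ω^{(m-1)(n-1)} where ω = e^{-2πi/N}, and write F = A + Bi with A, B real. Then A·B = B·A = 0 (the zero matrix). -/
open Matrix Complex

lemma sum_exp_im_zero (N : ℕ) (c : ℂ) (hc : Complex.exp (c * N) = 1) :
    (∑ n : Fin N, Complex.exp (c * n)).im = 0 := by
  have key : (∑ n : Fin N, Complex.exp (c * n))
      = ∑ n ∈ Finset.range N, (Complex.exp c) ^ n := by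
    rw [Fin.sum_univ_eq_sum_range (fun n => Complex.exp (c * n)) N]
    refine Finset.sum_congr rfl fun n _ => ?_
    rw [← Complex.exp_nat_mul, mul_comm]
  rw [key]
  by_cases h1 : Complex.exp c = 1
  · simp [h1]
  · have hxN : Complex.exp c ^ N = 1 := by
      rw [← Complex.exp_nat_mul, mul_comm]; exact hc
    rw [geom_sum_eq h1, hxN]
    simp

theorem dft_re_im_mul_eq_zero (N : ℕ) (hN : 0 < N)
    (F : Matrix (Fin N) (Fin N) ℂ)
    (hF : ∀ m n : Fin N, F m n = Complex.exp (-2 * Real.pi * Complex.I * (m : ℕ) * (n : ℕ) / N))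
    (A B : Matrix (Fin N) (Fin N) ℝ)
    (hA : ∀ m n, A m n = (F m n).re) (hB : ∀ m n, B m n = (F m n).im) :
    A * B = 0 ∧ B * A = 0 := by
  have hNC : (N : ℂ) ≠ 0 := Nat.cast_ne_zero.mpr hN.ne'
  have hadd : ∀ m k : Fin N, (A * B) m k + (B * A) m k = 0 := by
    intro m k
    have hcN : Complex.exp
        ((-2 * (Real.pi : ℂ) * Complex.I * (((m : ℕ) : ℂ) + ((k : ℕ) : ℂ)) / N) * N) = 1 := by
      have harg : (-2 * (Real.pi : ℂ) * Complex.I * (((m : ℕ) : ℂ) + ((k : ℕ) : ℂ)) / N) * N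
          = ((-(((m : ℕ) : ℤ) + ((k : ℕ) : ℤ)) : ℤ) : ℂ) * (2 * (Real.pi : ℂ) * Complex.I) := by
        push_cast
        field_simp
      rw [harg]
      exact Complex.exp_int_mul_two_pi_mul_I _
    have h0 : (∑ n : Fin N, F m n * F n k).im = 0 := by
      have hsum : (∑ n : Fin N, F m n * F n k)
          = ∑ n : Fin N, Complex.exp
              ((-2 * (Real.pi : ℂ) * Complex.I * (((m : ℕ) : ℂ) + ((k : ℕ) : ℂ)) / N) * n) := by
        refine Finset.sum_congr rfl fun n _ => ?_
        rw [hF, hF, ← Complex.exp_add]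
        congr 1
        ring
      rw [hsum]
      exact sum_exp_im_zero N _ hcN
    have h1 : (∑ n : Fin N, F m n * F n k).im
        = (A * B) m k + (B * A) m k := by
      rw [Complex.im_sum, Matrix.mul_apply, Matrix.mul_apply, ← Finset.sum_add_distrib]
      refine Finset.sum_congr rfl fun n _ => ?_
      rw [Complex.mul_im, hA, hB, hA, hB]
    rw [← h1, h0]
  have hsub : ∀ m k : Fin N, (A * B) m k - (B * A) m k = 0 := by
    intro m k
    have hcN : Complex.exp
        ((2 * (Real.pi : ℂ) * Complex.I * (((m : ℕ) : ℂ) - ((k : ℕ) : ℂ)) / N) * N) = 1 := by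
      have harg : (2 * (Real.pi : ℂ) * Complex.I * (((m : ℕ) : ℂ) - ((k : ℕ) : ℂ)) / N) * N
          = (((((m : ℕ) : ℤ) - ((k : ℕ) : ℤ)) : ℤ) : ℂ) * (2 * (Real.pi : ℂ) * Complex.I) := by
        push_cast
        field_simp
      rw [harg]
      exact Complex.exp_int_mul_two_pi_mul_I _
    have h0 : (∑ n : Fin N, (starRingEnd ℂ) (F m n) * F n k).im = 0 := by
      have hsum : (∑ n : Fin N, (starRingEnd ℂ) (F m n) * F n k)
          = ∑ n : Fin N, Complex.exp
              ((2 * (Real.pi : ℂ) * Complex.I * (((m : ℕ) : ℂ) - ((k : ℕ) : ℂ)) / N) * n) := by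
        refine Finset.sum_congr rfl fun n _ => ?_
        rw [hF, hF, ← Complex.exp_conj, ← Complex.exp_add]
        congr 1
        simp only [map_div₀, _root_.map_mul, map_neg, map_ofNat, Complex.conj_ofReal,
          Complex.conj_I, Complex.conj_natCast]
        ring
      rw [hsum]
      exact sum_exp_im_zero N _ hcN
    have h1 : (∑ n : Fin N, (starRingEnd ℂ) (F m n) * F n k).im
        = (A * B) m k - (B * A) m k := by
      rw [Complex.im_sum, Matrix.mul_apply, Matrix.mul_apply, ← Finset.sum_sub_distrib]
      refine Finset.sum_congr rfl fun n _ => ?_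
      rw [Complex.mul_im, Complex.conj_re, Complex.conj_im, hA, hB, hA, hB]
      ring
    rw [← h1, h0]
  constructor <;> ext m k <;>
    · have h1 := hadd m k
      have h2 := hsub m k
      simp only [Matrix.zero_apply]
      linarith
end

section
/- Let A, B be real symmetric matrices with AB = BA = 0 and A² + B² = N·I, and Λ a diagonal matrix with entries in [0,1]. With P = (1/N)(AΛA + BΛB) and Q = (1/N)(AΛB + BΛA), it holds that P² + Q² ⪯ P, and consequently Q² ⪯ P - P². -/
open Matrix

theorem P_sq_add_Q_sq_le_P {N : ℕ} (hN : 0 < N)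
    (A B : Matrix (Fin N) (Fin N) ℝ)
    (hAs : A.IsSymm) (hBs : B.IsSymm)
    (hAB : A * B = 0) (hBA : B * A = 0)
    (hsum : A * A + B * B = (N : ℝ) • (1 : Matrix (Fin N) (Fin N) ℝ))
    (d : Fin N → ℝ) (hd : ∀ i, d i ∈ Set.Icc (0 : ℝ) 1)
    (P Q : Matrix (Fin N) (Fin N) ℝ)
    (hP : P = ((N : ℝ)⁻¹) • (A * Matrix.diagonal d * A + B * Matrix.diagonal d * B))
    (hQ : Q = ((N : ℝ)⁻¹) • (A * Matrix.diagonal d * B + B * Matrix.diagonal d * A)) :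
    (P - (P * P + Q * Q)).PosSemidef ∧ ((P - P * P) - Q * Q).PosSemidef := by
  have hNne : (N : ℝ) ≠ 0 := Nat.cast_ne_zero.mpr hN.ne'
  set Λ : Matrix (Fin N) (Fin N) ℝ := Matrix.diagonal d with hΛ
  have hABX : ∀ X : Matrix (Fin N) (Fin N) ℝ, A * (B * X) = 0 := fun X => by
    rw [← Matrix.mul_assoc, hAB, Matrix.zero_mul]
  have hBAX : ∀ X : Matrix (Fin N) (Fin N) ℝ, B * (A * X) = 0 := fun X => by
    rw [← Matrix.mul_assoc, hBA, Matrix.zero_mul]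
  -- expansion of S*S + T*T
  have expand : (A * Λ * A + B * Λ * B) * (A * Λ * A + B * Λ * B)
      + (A * Λ * B + B * Λ * A) * (A * Λ * B + B * Λ * A)
      = A * Λ * (A * A + B * B) * Λ * A + B * Λ * (A * A + B * B) * Λ * B := by
    simp only [Matrix.mul_add, Matrix.add_mul, Matrix.mul_assoc, hABX, hBAX,
      Matrix.mul_zero, Matrix.zero_mul, add_zero, zero_add]
    abel
  have expand2 : (A * Λ * A + B * Λ * B) * (A * Λ * A + B * Λ * B)
      + (A * Λ * B + B * Λ * A) * (A * Λ * B + B * Λ * A)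
      = (N : ℝ) • (A * (Λ * Λ) * A + B * (Λ * Λ) * B) := by
    rw [expand, hsum]
    simp only [Matrix.mul_smul, Matrix.smul_mul, Matrix.mul_one, Matrix.mul_assoc, smul_add]
  have key : P - (P * P + Q * Q)
      = A * ((N : ℝ)⁻¹ • (Λ - Λ * Λ)) * A + B * ((N : ℝ)⁻¹ • (Λ - Λ * Λ)) * B := by
    rw [hP, hQ]
    simp only [Matrix.smul_mul, Matrix.mul_smul, smul_smul, ← smul_add]
    rw [expand2, smul_smul,
      show (N:ℝ)⁻¹ * (N:ℝ)⁻¹ * (N:ℝ) = (N:ℝ)⁻¹ by field_simp, ← smul_sub]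
    congr 1
    simp only [Matrix.mul_sub, Matrix.sub_mul, Matrix.mul_assoc]
    abel
  have hdiag : (N : ℝ)⁻¹ • (Λ - Λ * Λ)
      = Matrix.diagonal (fun i => (N : ℝ)⁻¹ * (d i - d i * d i)) := by
    rw [hΛ, Matrix.diagonal_mul_diagonal]
    ext i j
    by_cases h : i = j <;>
      simp [Matrix.diagonal_apply, h, mul_sub]
  have hDpsd : ((N : ℝ)⁻¹ • (Λ - Λ * Λ)).PosSemidef := by
    rw [hdiag]
    refine Matrix.posSemidef_diagonal_iff.mpr fun i => ?_
    have h0 := (hd i).1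
    have h1 := (hd i).2
    have : 0 ≤ d i - d i * d i := by nlinarith
    positivity
  have hApsd : (A * ((N : ℝ)⁻¹ • (Λ - Λ * Λ)) * A).PosSemidef := by
    have := hDpsd.mul_mul_conjTranspose_same A
    rwa [Matrix.conjTranspose_eq_transpose_of_trivial, hAs.eq] at this
  have hBpsd : (B * ((N : ℝ)⁻¹ • (Λ - Λ * Λ)) * B).PosSemidef := by
    have := hDpsd.mul_mul_conjTranspose_same B
    rwa [Matrix.conjTranspose_eq_transpose_of_trivial, hBs.eq] at this
  have main : (P - (P * P + Q * Q)).PosSemidef := by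
    rw [key]; exact hApsd.add hBpsd
  exact ⟨main, by rwa [sub_sub] ⟩
end

section
/- Let A, B be real symmetric with AB = BA = 0 and A² + B² = N·I, Λ_x diagonal with entries in [0,1], and Λ_y = (I - Λ_x²)^{1/2}. Define C_x = AΛ_xA + BΛ_xB, D_x = AΛ_xB - BΛ_xA, and similarly C_y, D_y with Λ_y. Then C_x² - D_x² + C_y² - D_y² = N²·I. -/
open Matrix

lemma key_CD {N : ℕ} (A B L : Matrix (Fin N) (Fin N) ℝ)
    (hAB : A * B = 0) (hBA : B * A = 0)
    (hsum : A * A + B * B = (N : ℝ) • (1 : Matrix (Fin N) (Fin N) ℝ)) :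
    (A * L * A + B * L * B) * (A * L * A + B * L * B)
      - (A * L * B - B * L * A) * (A * L * B - B * L * A)
      = (N : ℝ) • (A * (L * L) * A + B * (L * L) * B) := by
  have z1 : A * L * A * (B * L * B) = 0 := by
    have : A * L * A * (B * L * B) = A * L * ((A * B) * (L * B)) := by
      simp only [Matrix.mul_assoc]
    rw [this, hAB]; simp
  have z2 : B * L * B * (A * L * A) = 0 := by
    have : B * L * B * (A * L * A) = B * L * ((B * A) * (L * A)) := by
      simp only [Matrix.mul_assoc]
    rw [this, hBA]; simp
  have z3 : A * L * B * (A * L * B) = 0 := by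
    have : A * L * B * (A * L * B) = A * L * ((B * A) * (L * B)) := by
      simp only [Matrix.mul_assoc]
    rw [this, hBA]; simp
  have z4 : B * L * A * (B * L * A) = 0 := by
    have : B * L * A * (B * L * A) = B * L * ((A * B) * (L * A)) := by
      simp only [Matrix.mul_assoc]
    rw [this, hAB]; simp
  have e1 : A * L * A * (A * L * A) + A * L * B * (B * L * A)
      = A * L * ((A * A + B * B) * (L * A)) := by
    simp only [Matrix.add_mul, Matrix.mul_add, Matrix.mul_assoc]
  have e2 : B * L * B * (B * L * B) + B * L * A * (A * L * B)
      = B * L * ((A * A + B * B) * (L * B)) := by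
    simp only [Matrix.add_mul, Matrix.mul_add, Matrix.mul_assoc]
    rw [add_comm]
  rw [add_mul, mul_add, mul_add, sub_mul, mul_sub, mul_sub, z1, z2, z3, z4]
  have goal2 : A * L * A * (A * L * A) + 0 + (0 + B * L * B * (B * L * B))
      - (0 - A * L * B * (B * L * A) - (B * L * A * (A * L * B) - 0))
      = A * L * ((A * A + B * B) * (L * A)) + B * L * ((A * A + B * B) * (L * B)) := by
    rw [← e1, ← e2]; abel
  rw [goal2, hsum]
  simp only [Matrix.smul_mul, Matrix.mul_smul, Matrix.one_mul, smul_add, Matrix.mul_assoc]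

theorem Cx_Dx_Cy_Dy_identity {N : ℕ} (hN : 0 < N)
    (A B : Matrix (Fin N) (Fin N) ℝ)
    (hAs : A.IsSymm) (hBs : B.IsSymm)
    (hAB : A * B = 0) (hBA : B * A = 0)
    (hsum : A * A + B * B = (N : ℝ) • (1 : Matrix (Fin N) (Fin N) ℝ))
    (dx dy : Fin N → ℝ) (hdx : ∀ i, dx i ∈ Set.Icc (0 : ℝ) 1)
    (hdy : ∀ i, dy i = Real.sqrt (1 - dx i ^ 2))
    (Cx Dx Cy Dy : Matrix (Fin N) (Fin N) ℝ)
    (hCx : Cx = A * Matrix.diagonal dx * A + B * Matrix.diagonal dx * B)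
    (hDx : Dx = A * Matrix.diagonal dx * B - B * Matrix.diagonal dx * A)
    (hCy : Cy = A * Matrix.diagonal dy * A + B * Matrix.diagonal dy * B)
    (hDy : Dy = A * Matrix.diagonal dy * B - B * Matrix.diagonal dy * A) :
    Cx * Cx - Dx * Dx + Cy * Cy - Dy * Dy =
      ((N : ℝ) ^ 2) • (1 : Matrix (Fin N) (Fin N) ℝ) := by
  have h1 := key_CD A B (Matrix.diagonal dx) hAB hBA hsum
  have h2 := key_CD A B (Matrix.diagonal dy) hAB hBA hsum
  have hL : Matrix.diagonal dx * Matrix.diagonal dx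
      + Matrix.diagonal dy * Matrix.diagonal dy = (1 : Matrix (Fin N) (Fin N) ℝ) := by
    rw [Matrix.diagonal_mul_diagonal, Matrix.diagonal_mul_diagonal, Matrix.diagonal_add,
      ← Matrix.diagonal_one]
    have hfe : (fun i => dx i * dx i + dy i * dy i) = fun _ : Fin N => (1 : ℝ) := by
      funext i
      have hx1 := (hdx i).1
      have hx2 := (hdx i).2
      have hnn : (0 : ℝ) ≤ 1 - dx i ^ 2 := by nlinarith
      rw [hdy i, Real.mul_self_sqrt hnn]
      ring
    rw [hfe]
  calc Cx * Cx - Dx * Dx + Cy * Cy - Dy * Dy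
      = (Cx * Cx - Dx * Dx) + (Cy * Cy - Dy * Dy) := by abel
    _ = (N : ℝ) • (A * (Matrix.diagonal dx * Matrix.diagonal dx) * A
          + B * (Matrix.diagonal dx * Matrix.diagonal dx) * B)
        + (N : ℝ) • (A * (Matrix.diagonal dy * Matrix.diagonal dy) * A
          + B * (Matrix.diagonal dy * Matrix.diagonal dy) * B) := by
        rw [hCx, hDx, hCy, hDy, h1, h2]
    _ = (N : ℝ) • (A * (Matrix.diagonal dx * Matrix.diagonal dx
          + Matrix.diagonal dy * Matrix.diagonal dy) * A
        + B * (Matrix.diagonal dx * Matrix.diagonal dx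
          + Matrix.diagonal dy * Matrix.diagonal dy) * B) := by
        rw [← smul_add, Matrix.mul_add, Matrix.mul_add, Matrix.add_mul, Matrix.add_mul]
        congr 1
        abel
    _ = ((N : ℝ) ^ 2) • (1 : Matrix (Fin N) (Fin N) ℝ) := by
        rw [hL, Matrix.mul_one, Matrix.mul_one, hsum, smul_smul, sq]
end

section
/- Under the conditions AB = BA = 0, A² + B² = NI, Λ diagonal with entries in [0,1], P = (1/N)(AΛA + BΛB), and Q = (1/N)(AΛB + BΛA), for any θ: (2cos²θ/(1+cos²θ))·Q² ⪯ (cos²θ/(1+cos²θ))·(I - (P² + (I-P)²)). -/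
open Matrix

lemma psd_smul' {N : ℕ} (c : ℝ) (hc : 0 ≤ c) (M : Matrix (Fin N) (Fin N) ℝ)
    (hM : M.PosSemidef) : (c • M).PosSemidef := by
  refine posSemidef_iff_dotProduct_mulVec.mpr ⟨?_, fun x => by
    rw [smul_mulVec, dotProduct_smul, smul_eq_mul]
    exact mul_nonneg hc (hM.dotProduct_mulVec_nonneg x)⟩
  show (c • M)ᴴ = c • M
  rw [conjTranspose_smul, hM.1.eq]
  simp

lemma psd_sandwich {N : ℕ} (A : Matrix (Fin N) (Fin N) ℝ) (hAs : A.IsSymm)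
    (e : Fin N → ℝ) (he : ∀ i, 0 ≤ e i) :
    (A * Matrix.diagonal e * A).PosSemidef := by
  have key : A * Matrix.diagonal e * A
      = (Matrix.diagonal (fun i => Real.sqrt (e i)) * A)ᴴ *
        (Matrix.diagonal (fun i => Real.sqrt (e i)) * A) := by
    rw [conjTranspose_mul]
    have h1 : (Matrix.diagonal (fun i => Real.sqrt (e i)))ᴴ
        = Matrix.diagonal (fun i => Real.sqrt (e i)) := by
      simp [conjTranspose, Matrix.diagonal_transpose]
    have h2 : Aᴴ = A := by
      rw [conjTranspose_eq_transpose_of_trivial]; exact hAs.eq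
    rw [h1, h2]
    simp only [Matrix.mul_assoc]
    rw [← Matrix.mul_assoc (Matrix.diagonal _) (Matrix.diagonal _) A,
      Matrix.diagonal_mul_diagonal]
    have hee : (fun i => Real.sqrt (e i) * Real.sqrt (e i)) = e :=
      funext fun i => Real.mul_self_sqrt (he i)
    rw [hee]
  rw [key]
  exact posSemidef_conjTranspose_mul_self _

theorem Q_sq_loewner_bound {N : ℕ} (hN : 0 < N)
    (A B : Matrix (Fin N) (Fin N) ℝ)
    (hAs : A.IsSymm) (hBs : B.IsSymm)
    (hAB : A * B = 0) (hBA : B * A = 0)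
    (hsum : A * A + B * B = (N : ℝ) • (1 : Matrix (Fin N) (Fin N) ℝ))
    (d : Fin N → ℝ) (hd : ∀ i, d i ∈ Set.Icc (0 : ℝ) 1)
    (P Q : Matrix (Fin N) (Fin N) ℝ)
    (hP : P = ((N : ℝ)⁻¹) • (A * Matrix.diagonal d * A + B * Matrix.diagonal d * B))
    (hQ : Q = ((N : ℝ)⁻¹) • (A * Matrix.diagonal d * B + B * Matrix.diagonal d * A))
    (θ : ℝ) :
    ((Real.cos θ ^ 2 / (1 + Real.cos θ ^ 2)) •
        ((1 : Matrix (Fin N) (Fin N) ℝ) - (P * P + (1 - P) * (1 - P))) -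
      (2 * Real.cos θ ^ 2 / (1 + Real.cos θ ^ 2)) • (Q * Q)).PosSemidef := by
  set c : ℝ := Real.cos θ ^ 2 / (1 + Real.cos θ ^ 2) with hc
  have hden : (0:ℝ) < 1 + Real.cos θ ^ 2 := by positivity
  have hc0 : 0 ≤ c := by positivity
  have hNne : (N : ℝ) ≠ 0 := Nat.cast_ne_zero.mpr hN.ne'
  set D := Matrix.diagonal d with hD
  set e : Fin N → ℝ := fun i => d i - d i * d i with he
  have he0 : ∀ i, 0 ≤ e i := fun i => by
    obtain ⟨h0, h1⟩ := hd i
    show 0 ≤ d i - d i * d i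
    nlinarith
  -- zero product helper
  have hz : ∀ X Y Z W : Matrix (Fin N) (Fin N) ℝ, Y * Z = 0 →
      X * D * Y * (Z * D * W) = 0 := by
    intro X Y Z W h
    simp only [Matrix.mul_assoc]
    rw [← Matrix.mul_assoc Y Z, h, Matrix.zero_mul]
    simp
  have hnz : ∀ X Y Z W : Matrix (Fin N) (Fin N) ℝ,
      X * D * Y * (Z * D * W) = X * D * (Y * Z) * (D * W) := by
    intro X Y Z W
    simp only [Matrix.mul_assoc]
  -- key: P*P + Q*Q = N⁻¹ • (A*(D*D)*A + B*(D*D)*B)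
  have hPQ : P * P + Q * Q = ((N : ℝ)⁻¹) • (A * (D * D) * A + B * (D * D) * B) := by
    rw [hP, hQ, smul_mul_smul_comm, smul_mul_smul_comm, ← smul_add]
    have expand : (A * D * A + B * D * B) * (A * D * A + B * D * B)
        + (A * D * B + B * D * A) * (A * D * B + B * D * A)
        = A * D * ((A * A + B * B) * (D * A)) + B * D * ((A * A + B * B) * (D * B)) := by
      simp only [Matrix.add_mul, Matrix.mul_add]
      rw [hz A A B B hAB, hz B B A A hBA, hz A B A B hBA, hz B A B A hAB,
        hnz A A A A, hnz B B B B, hnz A B B A, hnz B A A B]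
      simp only [Matrix.mul_assoc, Matrix.add_mul]
      abel
    rw [expand, hsum]
    simp only [Matrix.smul_mul, Matrix.mul_smul, Matrix.one_mul, ← smul_add, smul_smul]
    rw [show (N:ℝ)⁻¹ * (N:ℝ)⁻¹ * (N:ℝ) = (N:ℝ)⁻¹ by field_simp]
    simp only [Matrix.mul_assoc]
  have hE : Matrix.diagonal e = D - D * D := by
    rw [hD, Matrix.diagonal_mul_diagonal, ← Matrix.diagonal_sub]
  have hMeq : P - (P * P + Q * Q)
      = ((N : ℝ)⁻¹) • (A * Matrix.diagonal e * A + B * Matrix.diagonal e * B) := by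
    rw [hPQ, hP, hE, ← smul_sub]
    congr 1
    simp only [Matrix.mul_sub, Matrix.sub_mul]
    abel
  have hpsd : (P - (P * P + Q * Q)).PosSemidef := by
    rw [hMeq]
    exact psd_smul' _ (by positivity)
      _ ((psd_sandwich A hAs e he0).add (psd_sandwich B hBs e he0))
  have hfinal : c • ((1 : Matrix (Fin N) (Fin N) ℝ) - (P * P + (1 - P) * (1 - P))) -
      (2 * c) • (Q * Q) = (2 * c) • (P - (P * P + Q * Q)) := by
    simp only [Matrix.mul_sub, Matrix.sub_mul, Matrix.mul_one, Matrix.one_mul]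
    module
  rw [show 2 * Real.cos θ ^ 2 / (1 + Real.cos θ ^ 2) = 2 * c from by rw [hc]; ring,
    hfinal]
  exact psd_smul' _ (by positivity) _ hpsd
end

section
/- If Σ_FreqPrior = I - (2cos²θ/(1+cos²θ))Q² and Σ_FreeInit = P² + (I-P)², with Q² ⪯ P - P² and 0 ⪯ P ⪯ I, then ‖I - Σ_FreqPrior‖_F ≤ (cos²θ/(1+cos²θ))·‖I - Σ_FreeInit‖_F. -/
open Matrix

private lemma trace_psd_mul_nonneg {N : ℕ} (A B : Matrix (Fin N) (Fin N) ℝ)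
    (hA : A.PosSemidef) (hB : B.PosSemidef) : 0 ≤ (A * B).trace := by
  obtain ⟨C, rfl⟩ : ∃ C : Matrix (Fin N) (Fin N) ℝ, A = Cᴴ * C := by
    open scoped MatrixOrder in exact CStarAlgebra.nonneg_iff_eq_star_mul_self.mp hA.nonneg
  obtain ⟨D, rfl⟩ : ∃ D : Matrix (Fin N) (Fin N) ℝ, B = Dᴴ * D := by
    open scoped MatrixOrder in exact CStarAlgebra.nonneg_iff_eq_star_mul_self.mp hB.nonneg
  have h : (Cᴴ * C * (Dᴴ * D)).trace = ((C * Dᴴ)ᴴ * (C * Dᴴ)).trace := by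
    rw [Matrix.conjTranspose_mul, Matrix.conjTranspose_conjTranspose]
    simp only [Matrix.mul_assoc]
    rw [Matrix.trace_mul_comm D (Cᴴ * (C * Dᴴ))]
    simp only [Matrix.mul_assoc]
  rw [h]
  have : ((C * Dᴴ)ᴴ * (C * Dᴴ)).trace = ∑ j, ∑ i, ((C * Dᴴ) i j) ^ 2 := by
    simp [Matrix.trace, Matrix.diag, Matrix.mul_apply, Matrix.conjTranspose_apply, sq, mul_comm]
  rw [this]
  positivity

private lemma sum_sq_le_of_psd_le {N : ℕ} (A B : Matrix (Fin N) (Fin N) ℝ)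
    (hA : A.PosSemidef) (hBA : (B - A).PosSemidef) :
    ∑ i, ∑ j, (A i j) ^ 2 ≤ ∑ i, ∑ j, (B i j) ^ 2 := by
  have hB : B.PosSemidef := by simpa using hBA.add hA
  have key : 0 ≤ ((B - A) * B).trace + (A * (B - A)).trace :=
    add_nonneg (trace_psd_mul_nonneg _ _ hBA hB) (trace_psd_mul_nonneg _ _ hA hBA)
  have hexp : ((B - A) * B).trace + (A * (B - A)).trace = (B * B).trace - (A * A).trace := by
    rw [Matrix.sub_mul, Matrix.mul_sub, Matrix.trace_sub, Matrix.trace_sub]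
    ring
  have htr : ∀ M : Matrix (Fin N) (Fin N) ℝ, M.IsHermitian →
      (M * M).trace = ∑ i, ∑ j, (M i j) ^ 2 := by
    intro M hM
    have : ∀ i j, M j i = M i j := fun i j => by
      conv_lhs => rw [← hM.eq]
      simp [Matrix.conjTranspose_apply]
    simp only [Matrix.trace, Matrix.diag, Matrix.mul_apply, sq]
    refine Finset.sum_congr rfl fun i _ => Finset.sum_congr rfl fun j _ => ?_
    rw [this i j]
  rw [hexp] at key
  rw [← htr A hA.isHermitian, ← htr B hB.isHermitian]
  linarith

theorem covariance_error_bound {N : ℕ}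
    (P Q : Matrix (Fin N) (Fin N) ℝ)
    (hPs : P.IsSymm) (hQs : Q.IsSymm)
    (hP0 : P.PosSemidef) (hP1 : ((1 : Matrix (Fin N) (Fin N) ℝ) - P).PosSemidef)
    (hQle : ((P - P * P) - Q * Q).PosSemidef)
    (θ : ℝ)
    (SigmaFreq SigmaFree : Matrix (Fin N) (Fin N) ℝ)
    (hfreq : SigmaFreq = (1 : Matrix (Fin N) (Fin N) ℝ) -
      (2 * Real.cos θ ^ 2 / (1 + Real.cos θ ^ 2)) • (Q * Q))
    (hfree : SigmaFree = P * P + (1 - P) * (1 - P)) :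
    Real.sqrt (∑ i, ∑ j, (((1 : Matrix (Fin N) (Fin N) ℝ) - SigmaFreq) i j) ^ 2) ≤
      (Real.cos θ ^ 2 / (1 + Real.cos θ ^ 2)) *
        Real.sqrt (∑ i, ∑ j, (((1 : Matrix (Fin N) (Fin N) ℝ) - SigmaFree) i j) ^ 2) := by
  set c : ℝ := Real.cos θ ^ 2 / (1 + Real.cos θ ^ 2) with hc
  have hd : (0:ℝ) < 1 + Real.cos θ ^ 2 := by positivity
  have hc0 : 0 ≤ c := by positivity
  have hQ2 : (Q * Q).PosSemidef := by
    have := Matrix.posSemidef_conjTranspose_mul_self Q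
    simpa [Matrix.IsSymm.eq hQs] using this
  -- rewrite the matrices
  have hA : (1 : Matrix (Fin N) (Fin N) ℝ) - SigmaFreq = (2 * c) • (Q * Q) := by
    rw [hfreq]; rw [show 2 * Real.cos θ ^ 2 / (1 + Real.cos θ ^ 2) = 2 * c by
      rw [hc]; ring]
    abel
  have hB : (1 : Matrix (Fin N) (Fin N) ℝ) - SigmaFree = (2:ℝ) • (P - P * P) := by
    rw [hfree]
    have : (1 - P) * (1 - P) = 1 - P - P + P * P := by noncomm_ring
    rw [this]
    ext i j
    simp [Matrix.sub_apply, Matrix.add_apply, Matrix.smul_apply]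
    ring
  rw [hA, hB]
  have hsumA : ∑ i, ∑ j, (((2 * c) • (Q * Q)) i j) ^ 2
      = (2 * c) ^ 2 * ∑ i, ∑ j, ((Q * Q) i j) ^ 2 := by
    simp [Matrix.smul_apply, mul_pow, Finset.mul_sum]
  have hsumB : ∑ i, ∑ j, (((2:ℝ) • (P - P * P)) i j) ^ 2
      = (2:ℝ) ^ 2 * ∑ i, ∑ j, ((P - P * P) i j) ^ 2 := by
    simp [Matrix.smul_apply, mul_pow, Finset.mul_sum]
  rw [hsumA, hsumB]
  have hsq : ∑ i, ∑ j, ((Q * Q) i j) ^ 2 ≤ ∑ i, ∑ j, ((P - P * P) i j) ^ 2 :=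
    sum_sq_le_of_psd_le _ _ hQ2 hQle
  have h1 : ∀ (t : ℝ) (s : ℝ), 0 ≤ t → Real.sqrt (t ^ 2 * s) = t * Real.sqrt s := by
    intro t s ht
    rw [Real.sqrt_mul (by positivity), Real.sqrt_sq ht]
  rw [h1 _ _ (by positivity), h1 _ _ (by norm_num)]
  have : Real.sqrt (∑ i, ∑ j, ((Q * Q) i j) ^ 2)
      ≤ Real.sqrt (∑ i, ∑ j, ((P - P * P) i j) ^ 2) := Real.sqrt_le_sqrt hsq
  calc 2 * c * Real.sqrt (∑ i, ∑ j, ((Q * Q) i j) ^ 2)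
      ≤ 2 * c * Real.sqrt (∑ i, ∑ j, ((P - P * P) i j) ^ 2) := by
        apply mul_le_mul_of_nonneg_left this (by positivity)
    _ = c * (2 * Real.sqrt (∑ i, ∑ j, ((P - P * P) i j) ^ 2)) := by ring
end
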